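/- Let G be a finite simple graph, k a positive integer, S ⊆ V(G), and let 𝒞 be the family of all inclusion-wise maximal chips. Then any chip C ∈ 𝒞 touches at most 3k · 4^{3k} other chips of 𝒞. -/

import Mathlib

open SimpleGraph

variable {V : Type*}

/-- The open neighbourhood `N_G(C)` of a vertex set `C`:
vertices outside `C` with a neighbour in `C`. -/
def setNbhd (G : SimpleGraph V) (C : Set V) : Set V :=
  {v | v ∉ C ∧ ∃ u ∈ C, G.Adj u v}

/-- The closed neighbourhood `N_G[C] = C ∪ N_G(C)`. -/
def closedNbhd (G : SimpleGraph V) (C : Set V) : Set V :=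
  C ∪ setNbhd G C

/-- `W` is `(q,k)`-unbreakable in the induced subgraph `G[U]`:
every separation `(A,B)` of `G[U]` of order at most `k` has
`|(A∖B) ∩ W| ≤ q` or `|(B∖A) ∩ W| ≤ q`. -/
def UnbreakableIn (G : SimpleGraph V) (U W : Set V) (q k : ℕ) : Prop :=
  ∀ A B : Set V, A ∪ B = U →
    (∀ a ∈ A \ B, ∀ b ∈ B \ A, ¬ G.Adj a b) →
    (A ∩ B).ncard ≤ k →
    ((A \ B) ∩ W).ncard ≤ q ∨ ((B \ A) ∩ W).ncard ≤ q

/-- `W` is `(q,k)`-unbreakable in `G`. -/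
def Unbreakable (G : SimpleGraph V) (W : Set V) (q k : ℕ) : Prop :=
  UnbreakableIn G Set.univ W q k

/-- `x` and `y` lie in the same connected component of `G − W`. -/
def ReachAvoid (G : SimpleGraph V) (W : Set V) (x y : V) : Prop :=
  ∃ (hx : x ∈ Wᶜ) (hy : y ∈ Wᶜ), (G.induce Wᶜ).Reachable ⟨x, hx⟩ ⟨y, hy⟩

/-- `W` is an `X–Y` separator: no connected component of `G − W` contains
a vertex of `X∖W` and a vertex of `Y∖W`. -/
def IsSeparator (G : SimpleGraph V) (X Y W : Set V) : Prop :=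
  ∀ x ∈ X \ W, ∀ y ∈ Y \ W, ¬ ReachAvoid G W x y

/-- `R_{G−W}(X∖W)`: the set of vertices reachable from `X∖W` in `G − W`. -/
def reachSet (G : SimpleGraph V) (W X : Set V) : Set V :=
  {y | ∃ x ∈ X \ W, ReachAvoid G W x y}

/-- `W` is an important `X–Y` separator. -/
def IsImportantSeparator (G : SimpleGraph V) (X Y W : Set V) : Prop :=
  IsSeparator G X Y W ∧
  (∀ W' ⊆ W, IsSeparator G X Y W' → W' = W) ∧
  ∀ W' : Set V, IsSeparator G X Y W' → W'.ncard ≤ W.ncard →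
    ¬ reachSet G W X ⊂ reachSet G W' X

/-- A chip (w.r.t. `G`, `k` and `S`): `G[C]` is connected, `|N_G(C)| ≤ 3k`,
and `N_G(C)` is an important `C–S` separator. -/
def IsChip (G : SimpleGraph V) (k : ℕ) (S C : Set V) : Prop :=
  (G.induce C).Connected ∧ (setNbhd G C).ncard ≤ 3 * k ∧
  IsImportantSeparator G C S (setNbhd G C)

/-- The family of all inclusion-wise maximal chips. -/
def maximalChips (G : SimpleGraph V) (k : ℕ) (S : Set V) : Set (Set V) :=
  {C | IsChip G k S C ∧ ∀ C', IsChip G k S C' → C ⊆ C' → C' = C}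

/-- Two vertex sets touch: they intersect or some edge joins them. -/
def Touches (G : SimpleGraph V) (C₁ C₂ : Set V) : Prop :=
  (C₁ ∩ C₂).Nonempty ∨ ∃ u ∈ C₁, ∃ v ∈ C₂, G.Adj u v

/-- `D` is a connected component of `G − A`: a maximal set disjoint from `A`
inducing a connected subgraph. -/
def IsCompOf (G : SimpleGraph V) (A D : Set V) : Prop :=
  D ⊆ Aᶜ ∧ (G.induce D).Connected ∧
  ∀ D', D ⊆ D' → D' ⊆ Aᶜ → (G.induce D').Connected → D' = D

/-- The set `A = (⋂_{C ∈ 𝒞} V(G) ∖ N[C]) ∪ ⋃_{C ∈ 𝒞} N(C)` built from the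
maximal chips (equals `V(G)` when there are no chips). -/
def chipBag (G : SimpleGraph V) (k : ℕ) (S : Set V) : Set V :=
  (⋂ C ∈ maximalChips G k S, (closedNbhd G C)ᶜ) ∪
    ⋃ C ∈ maximalChips G k S, setNbhd G C

/-- `η(k) = 3k·(3k·4^{3k}+1)`. -/
def etaB (k : ℕ) : ℕ := 3 * k * (3 * k * 4 ^ (3 * k) + 1)

/-- `τ(k) = (3k)²·8^{3k} + 2k`. -/
def tauB (k : ℕ) : ℕ := (3 * k) ^ 2 * 8 ^ (3 * k) + 2 * k

/-- `τ′(k) = τ + (C(τ+k,2)·k + k)·k·η`. -/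
def tauB' (k : ℕ) : ℕ :=
  tauB k + ((tauB k + k).choose 2 * k + k) * k * etaB k

/-- The tree graph determined by a parent function. -/
def parentGraph {T : Type*} (parent : T → T) : SimpleGraph T where
  Adj t s := t ≠ s ∧ (parent t = s ∨ parent s = t)
  symm := by constructor; intro t s h; exact ⟨h.1.symm, h.2.symm⟩
  loopless := by constructor; intro t h; exact h.1 rfl

/-- The descendants of `t` (including `t` itself). -/
def descSet {T : Type*} (parent : T → T) (t : T) : Set T :=
  {u | ∃ n : ℕ, parent^[n] u = t}

/-- `γ(t) = ⋃_{u ⪯ t} β(u)`. -/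
def gammaSet {T : Type*} (parent : T → T) (β : T → Set V) (t : T) : Set V :=
  ⋃ u ∈ descSet parent t, β u

/-- `σ(t) = ∅` for the root, `β(t) ∩ β(parent t)` otherwise. -/
def sigmaSet {T : Type*} [DecidableEq T] (root : T) (parent : T → T)
    (β : T → Set V) (t : T) : Set V :=
  if t = root then ∅ else β t ∩ β (parent t)

/-- `(T,β)` (a rooted tree given by `root` and `parent`, with bags `β`)
is a tree decomposition of `G`. -/
structure IsTreeDecomp (G : SimpleGraph V) {T : Type*} (root : T) (parent : T → T)
    (β : T → Set V) : Prop where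
  parent_root : parent root = root
  reaches_root : ∀ t : T, ∃ n : ℕ, parent^[n] t = root
  bags_connected : ∀ v : V, ((parentGraph parent).induce {t | v ∈ β t}).Connected
  edge_in_bag : ∀ u v : V, G.Adj u v → ∃ t : T, u ∈ β t ∧ v ∈ β t
namespace ChipAux

open Relation

variable {V : Type*}

/-- One step of a walk avoiding `W`. -/
def Rel (G : SimpleGraph V) (W : Set V) (a b : V) : Prop :=
  G.Adj a b ∧ a ∉ W ∧ b ∉ W

/-- Reachability-from-`X`-avoiding-`W` set, in `ReflTransGen` form. -/
def rch (G : SimpleGraph V) (W X : Set V) : Set V :=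
  {y | y ∉ W ∧ ∃ x ∈ X \ W, ReflTransGen (Rel G W) x y}

lemma walk_to_rtg (G : SimpleGraph V) (s : Set V) :
    ∀ {a b : ↥s}, (G.induce s).Walk a b →
      ReflTransGen (fun u v => G.Adj u v ∧ u ∈ s ∧ v ∈ s) (a : V) (b : V) := by
  intro a b w
  induction w with
  | nil => exact ReflTransGen.refl
  | cons h _ ih => exact ReflTransGen.head ⟨h, by exact Subtype.coe_prop _, by exact Subtype.coe_prop _⟩ ih

lemma rtg_to_reachable (G : SimpleGraph V) (s : Set V) {x y : V}
    (h : ReflTransGen (fun u v => G.Adj u v ∧ u ∈ s ∧ v ∈ s) x y) (hx : x ∈ s) :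
    ∃ hy : y ∈ s, (G.induce s).Reachable ⟨x, hx⟩ ⟨y, hy⟩ := by
  induction h with
  | refl => exact ⟨hx, SimpleGraph.Reachable.refl _⟩
  | tail _ h₂ ih =>
      obtain ⟨hb, hr⟩ := ih
      exact ⟨h₂.2.2, hr.trans (SimpleGraph.Adj.reachable (by exact h₂.1))⟩

lemma reachAvoid_iff (G : SimpleGraph V) (W : Set V) (x y : V) :
    ReachAvoid G W x y ↔ x ∉ W ∧ y ∉ W ∧ ReflTransGen (Rel G W) x y := by
  constructor
  · rintro ⟨hx, hy, hr⟩
    refine ⟨hx, hy, ?_⟩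
    obtain ⟨w⟩ := hr
    have := walk_to_rtg G Wᶜ w
    exact ReflTransGen.mono (fun a b hab => ⟨hab.1, hab.2.1, hab.2.2⟩) _ _ this
  · rintro ⟨hx, hy, hr⟩
    obtain ⟨hy', hreach⟩ := rtg_to_reachable G Wᶜ
      (ReflTransGen.mono (fun a b hab => ⟨hab.1, hab.2.1, hab.2.2⟩) _ _ hr) hx
    exact ⟨hx, hy', hreach⟩

lemma reachSet_eq_rch (G : SimpleGraph V) (W X : Set V) :
    reachSet G W X = rch G W X := by
  ext y
  constructor
  · rintro ⟨x, hx, hra⟩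
    rw [reachAvoid_iff] at hra
    exact ⟨hra.2.1, x, hx, hra.2.2⟩
  · rintro ⟨hy, x, hx, hr⟩
    exact ⟨x, hx, (reachAvoid_iff G W x y).2 ⟨hx.2, hy, hr⟩⟩

variable {G : SimpleGraph V} {W W' X X' Y A B : Set V} {x y u v : V}

lemma rch_subset_compl : rch G W X ⊆ Wᶜ := fun _ hy => hy.1

lemma mem_rch_self (hx : x ∈ X) (hxW : x ∉ W) : x ∈ rch G W X :=
  ⟨hxW, x, ⟨hx, hxW⟩, ReflTransGen.refl⟩

lemma diff_subset_rch : X \ W ⊆ rch G W X := fun _ hx => mem_rch_self hx.1 hx.2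

lemma rch_step (hu : u ∈ rch G W X) (ha : G.Adj u v) (hv : v ∉ W) : v ∈ rch G W X := by
  obtain ⟨huW, x, hx, hr⟩ := hu
  exact ⟨hv, x, hx, hr.tail ⟨ha, huW, hv⟩⟩

lemma rch_subset_of_closed (hX : X \ W ⊆ A)
    (hstep : ∀ a ∈ A, ∀ b, G.Adj a b → b ∉ W → b ∈ A) : rch G W X ⊆ A := by
  rintro y ⟨hy, x, hx, hr⟩
  clear hy
  induction hr with
  | refl => exact hX hx
  | tail _ step ih => exact hstep _ ih _ step.1 step.2.2

lemma rch_mono_sources (h : X \ W ⊆ X' \ W) : rch G W X ⊆ rch G W X' := by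
  rintro y ⟨hy, x, hx, hr⟩
  exact ⟨hy, x, h hx, hr⟩

/-- Transfer of reach sets: if the reach set avoids `W'` and the sources transfer. -/
lemma rch_subset_rch (h1 : ∀ u ∈ rch G W X, u ∉ W') (h2 : X \ W ⊆ X' \ W') :
    rch G W X ⊆ rch G W' X' := by
  rintro y ⟨hy, x, hx, hr⟩
  clear hy
  induction hr with
  | refl => exact mem_rch_self (h2 hx).1 (h2 hx).2
  | @tail b c hr₁ step ih =>
      have hc : c ∈ rch G W X := ⟨step.2.2, x, hx, hr₁.tail step⟩
      exact rch_step ih step.1 (h1 _ hc)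

lemma rch_rch : rch G W (rch G W X) = rch G W X := by
  apply Set.Subset.antisymm
  · exact rch_subset_of_closed (fun y hy => hy.1) (fun a ha b hab hb => rch_step ha hab hb)
  · intro y hy
    exact mem_rch_self hy (rch_subset_compl hy)

lemma rch_anti (h : W' ⊆ W) : rch G W X ⊆ rch G W' X :=
  rch_subset_rch (fun u hu => fun hW' => (rch_subset_compl hu) (h hW'))
    (fun x hx => ⟨hx.1, fun hW' => hx.2 (h hW')⟩)

lemma setNbhd_disj (hu : u ∈ setNbhd G A) : u ∉ A := hu.1

lemma setNbhd_rch_subset : setNbhd G (rch G W X) ⊆ W := by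
  rintro u ⟨hu, r, hr, hadj⟩
  by_contra huW
  exact hu (rch_step hr hadj huW)

lemma rch_setNbhd_subset (hX : X ⊆ A) : rch G (setNbhd G A) X ⊆ A := by
  refine rch_subset_of_closed (fun x hx => hX hx.1) ?_
  intro a ha b hab hbN
  by_contra hbA
  exact hbN ⟨hbA, a, ha, hab⟩

lemma isSeparator_iff : IsSeparator G X Y W ↔ rch G W X ∩ Y = ∅ := by
  constructor
  · intro hsep
    ext y
    simp only [Set.mem_inter_iff, Set.mem_empty_iff_false, iff_false, not_and]
    rintro ⟨hyW, x, hx, hr⟩ hyY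
    exact hsep x hx y ⟨hyY, hyW⟩ ((reachAvoid_iff G W x y).2 ⟨hx.2, hyW, hr⟩)
  · intro h x hx y hy hra
    rw [reachAvoid_iff] at hra
    have : y ∈ rch G W X ∩ Y := ⟨⟨hra.2.1, x, hx, hra.2.2⟩, hy.1⟩
    rw [h] at this
    exact this

end ChipAux
namespace ChipAux

open Relation

variable {V : Type*} [Fintype V] [DecidableEq V]

open scoped Classical in
lemma ncard_as_sum (s : Set V) : s.ncard = ∑ v : V, if v ∈ s then 1 else 0 := by
  rw [Set.ncard_eq_toFinset_card' s, Finset.card_eq_sum_ones]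
  simp only [← Set.mem_toFinset]
  rw [Finset.sum_ite_mem, Finset.univ_inter]

lemma submod (G : SimpleGraph V) (A B : Set V) :
    (setNbhd G (A ∪ B)).ncard + (setNbhd G (A ∩ B)).ncard
      ≤ (setNbhd G A).ncard + (setNbhd G B).ncard := by
  classical
  simp only [ncard_as_sum]
  rw [← Finset.sum_add_distrib, ← Finset.sum_add_distrib]
  apply Finset.sum_le_sum
  intro v _
  by_cases h1 : v ∈ setNbhd G (A ∪ B) <;> by_cases h2 : v ∈ setNbhd G (A ∩ B)
  · -- both: v ∈ N(A) ∩ N(B)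
    obtain ⟨hv1, u, hu, hadj⟩ := id h2
    have hvA : v ∉ A := fun h => h1.1 (Or.inl h)
    have hvB : v ∉ B := fun h => h1.1 (Or.inr h)
    have hA : v ∈ setNbhd G A := ⟨hvA, u, hu.1, hadj⟩
    have hB : v ∈ setNbhd G B := ⟨hvB, u, hu.2, hadj⟩
    rw [if_pos h1, if_pos h2, if_pos hA, if_pos hB]
  · obtain ⟨hv1, u, hu, hadj⟩ := id h1
    have hvA : v ∉ A := fun h => hv1 (Or.inl h)
    have hvB : v ∉ B := fun h => hv1 (Or.inr h)
    rw [if_pos h1, if_neg h2]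
    rcases hu with hu | hu
    · rw [if_pos (show v ∈ setNbhd G A from ⟨hvA, u, hu, hadj⟩)]
      split_ifs <;> omega
    · rw [if_pos (show v ∈ setNbhd G B from ⟨hvB, u, hu, hadj⟩)]
      split_ifs <;> omega
  · obtain ⟨hv2, u, hu, hadj⟩ := id h2
    rw [if_neg h1, if_pos h2]
    by_cases hvA : v ∈ A
    · rw [if_pos (show v ∈ setNbhd G B from ⟨fun h => hv2 ⟨hvA, h⟩, u, hu.2, hadj⟩)]
      split_ifs <;> omega
    · rw [if_pos (show v ∈ setNbhd G A from ⟨hvA, u, hu.1, hadj⟩)]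
      split_ifs <;> omega
  · rw [if_neg h1, if_neg h2]
    split_ifs <;> omega

end ChipAux

namespace ChipAux

open Relation

variable {V : Type*}

/-- Delete a vertex (keep it isolated). -/
def delV (G : SimpleGraph V) (v : V) : SimpleGraph V where
  Adj a b := G.Adj a b ∧ a ≠ v ∧ b ≠ v
  symm := ⟨fun a b h => ⟨h.1.symm, h.2.2, h.2.1⟩⟩
  loopless := ⟨fun a h => G.irrefl h.1⟩

variable {G : SimpleGraph V} {W X Y U R : Set V} {v : V}

lemma rel_delV (v : V) (U : Set V) :
    Rel (delV G v) U = Rel G (insert v U) := by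
  funext a b
  simp only [Rel, delV, Set.mem_insert_iff, eq_iff_iff]
  constructor
  · rintro ⟨⟨hadj, hav, hbv⟩, haU, hbU⟩
    exact ⟨hadj, by tauto, by tauto⟩
  · rintro ⟨hadj, ha, hb⟩
    exact ⟨⟨hadj, by tauto, by tauto⟩, by tauto, by tauto⟩

lemma rch_delV (hv : v ∉ X) : rch (delV G v) U X = rch G (insert v U) X := by
  ext y
  constructor
  · rintro ⟨hyU, x, hx, hr⟩
    have hxv : x ≠ v := fun h => hv (h ▸ hx.1)
    have hyv : y ≠ v := by
      rcases hr.cases_tail with heq | ⟨c, _, step⟩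
      · exact heq ▸ hxv
      · exact step.1.2.2
    rw [rel_delV] at hr
    refine ⟨?_, x, ⟨hx.1, ?_⟩, hr⟩
    · simp only [Set.mem_insert_iff]; tauto
    · simp only [Set.mem_insert_iff]; push_neg; exact ⟨hxv, hx.2⟩
  · rintro ⟨hy, x, hx, hr⟩
    rw [← rel_delV (G := G) v U] at hr
    exact ⟨fun h => hy (Set.mem_insert_iff.2 (Or.inr h)), x,
      ⟨hx.1, fun h => hx.2 (Set.mem_insert_iff.2 (Or.inr h))⟩, hr⟩

lemma setNbhd_delV (hv : v ∉ R) :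
    setNbhd (delV G v) R = setNbhd G R \ {v} := by
  ext u
  simp only [setNbhd, delV, Set.mem_setOf_eq, Set.mem_diff, Set.mem_singleton_iff]
  constructor
  · rintro ⟨huR, r, hr, hadj, hrv, huv⟩
    exact ⟨⟨huR, r, hr, hadj⟩, huv⟩
  · rintro ⟨⟨huR, r, hr, hadj⟩, huv⟩
    exact ⟨huR, r, hr, hadj, fun h => hv (h ▸ hr), huv⟩

end ChipAux
namespace ChipAux

open Relation

variable {V : Type*} [Fintype V] [DecidableEq V]

/-- Our working notion of an "important separator datum". -/
def Imp (G : SimpleGraph V) (X Y : Set V) (p : ℕ) (W : Set V) : Prop :=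
  W.ncard ≤ p ∧ W ∩ X = ∅ ∧ rch G W X ∩ Y = ∅ ∧ W = setNbhd G (rch G W X) ∧
  ∀ U : Set V, rch G U (rch G W X) ∩ Y = ∅ → U.ncard ≤ W.ncard →
    ¬ rch G W X ⊂ rch G U (rch G W X)

/-- Sizes of `X`-disjoint `X–Y` cuts. -/
def cutSizes (G : SimpleGraph V) (X Y : Set V) : Set ℕ :=
  {n | ∃ U : Set V, rch G U X ∩ Y = ∅ ∧ U ∩ X = ∅ ∧ U.ncard = n}

/-- Minimum size of an `X`-disjoint `X–Y` cut. -/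
noncomputable def lam (G : SimpleGraph V) (X Y : Set V) : ℕ := sInf (cutSizes G X Y)

lemma disj_mem {α : Type*} {s t : Set α} (h : s ∩ t = ∅) {a : α}
    (ha : a ∈ s) (hb : a ∈ t) : False := by
  rw [Set.eq_empty_iff_forall_notMem] at h
  exact h a ⟨ha, hb⟩

lemma inter_empty_of_subset {α : Type*} {s s' t : Set α} (h : s ⊆ s')
    (h' : s' ∩ t = ∅) : s ∩ t = ∅ := by
  rw [Set.eq_empty_iff_forall_notMem] at h' ⊢
  exact fun a ⟨ha, hb⟩ => h' a ⟨h ha, hb⟩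

lemma imp_empty_of_no_cut {G : SimpleGraph V} {X Y : Set V} {p : ℕ}
    (h : ¬ (cutSizes G X Y).Nonempty) : {W : Set V | Imp G X Y p W} = ∅ := by
  ext W
  simp only [Set.mem_setOf_eq, Set.mem_empty_iff_false, iff_false]
  intro hW
  exact h ⟨W.ncard, W, hW.2.2.1, hW.2.1, rfl⟩

/-- Main counting theorem: at most `2^μ` important separators when `2p ≤ μ + λ`. -/
theorem imp_card (μ : ℕ) : ∀ (G : SimpleGraph V) (X Y : Set V) (p : ℕ),
    2 * p ≤ μ + lam G X Y → {W : Set V | Imp G X Y p W}.ncard ≤ 2 ^ μ := by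
  induction μ using Nat.strong_induction_on with
  | _ μ IH =>
  intro G X Y p hμ
  by_cases hne : (cutSizes G X Y).Nonempty
  swap
  · rw [imp_empty_of_no_cut hne]
    simp
  have hmem := Nat.sInf_mem hne
  by_cases hpl : p < lam G X Y
  · have hempty : {W : Set V | Imp G X Y p W} = ∅ := by
      ext W
      simp only [Set.mem_setOf_eq, Set.mem_empty_iff_false, iff_false]
      intro hW
      have h1 : lam G X Y ≤ W.ncard := Nat.sInf_le ⟨W, hW.2.2.1, hW.2.1, rfl⟩
      have h2 := hW.1
      omega
    rw [hempty]; simp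
  push_neg at hpl
  rcases Nat.eq_zero_or_pos (lam G X Y) with h0 | hpos
  · -- λ = 0 : at most one important separator
    obtain ⟨W₀, hs₀, hd₀, hc₀⟩ := hmem
    have hW₀e : W₀ = ∅ := (Set.ncard_eq_zero (Set.toFinite W₀)).1 (by rw [hc₀]; exact h0)
    rw [hW₀e] at hs₀
    have key : ∀ W, Imp G X Y p W → W = setNbhd G (rch G ∅ X) := by
      intro W hW
      obtain ⟨hWp, hWX, hWY, hWN, hWmax⟩ := hW
      have hXR : X ⊆ rch G W X := fun x hx =>
        mem_rch_self hx (fun hxW => disj_mem hWX hxW hx)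
      have hRsub : rch G W X ⊆ rch G ∅ X := rch_anti (Set.empty_subset W)
      have h1 : rch G ∅ (rch G W X) ⊆ rch G ∅ X := by
        have h2 : rch G ∅ (rch G W X) ⊆ rch G ∅ (rch G ∅ X) :=
          rch_mono_sources (by
            intro u hu
            exact ⟨hRsub hu.1, hu.2⟩)
        rw [rch_rch] at h2
        exact h2
      have hsepR : rch G ∅ (rch G W X) ∩ Y = ∅ := inter_empty_of_subset h1 hs₀
      have h5 := hWmax ∅ hsepR (by simp)
      have hRr : rch G W X ⊆ rch G ∅ (rch G W X) := fun u hu =>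
        mem_rch_self hu (Set.notMem_empty u)
      have heq1 : rch G ∅ (rch G W X) = rch G W X := by
        by_contra hne'
        exact h5 ⟨hRr, fun hsub => hne' (Set.Subset.antisymm hsub hRr)⟩
      have h6 : rch G ∅ X ⊆ rch G ∅ (rch G W X) :=
        rch_mono_sources (by
          intro u hu
          exact ⟨hXR hu.1, hu.2⟩)
      have hReq : rch G W X = rch G ∅ X :=
        Set.Subset.antisymm hRsub (heq1 ▸ h6)
      rw [hWN, hReq]
    have hsub : {W : Set V | Imp G X Y p W} ⊆ {setNbhd G (rch G ∅ X)} := by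
      intro W hW
      exact key W hW
    calc {W : Set V | Imp G X Y p W}.ncard
        ≤ ({setNbhd G (rch G ∅ X)} : Set (Set V)).ncard :=
          Set.ncard_le_ncard hsub (Set.toFinite _)
      _ = 1 := Set.ncard_singleton _
      _ ≤ 2 ^ μ := Nat.one_le_two_pow
  · -- main branching case, 1 ≤ lam ≤ p
    obtain ⟨W₀', hW₀s', hW₀d', hW₀c'⟩ := hmem
    have hMCne : {U : Set V | rch G U X ∩ Y = ∅ ∧ U ∩ X = ∅ ∧ U.ncard = lam G X Y}.Nonempty :=
      ⟨W₀', hW₀s', hW₀d', hW₀c'⟩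
    obtain ⟨W₀, hW₀MC, hW₀max⟩ := Set.exists_max_image
      {U : Set V | rch G U X ∩ Y = ∅ ∧ U ∩ X = ∅ ∧ U.ncard = lam G X Y}
      (fun U => (rch G U X).ncard) (Set.toFinite _) hMCne
    obtain ⟨hW₀s, hW₀d, hW₀c⟩ := hW₀MC
    have hXR₀ : X ⊆ rch G W₀ X := fun x hx => mem_rch_self hx (fun h => disj_mem hW₀d h hx)
    have hNsep : ∀ A : Set V, X ⊆ A → A ∩ Y = ∅ →
        rch G (setNbhd G A) X ∩ Y = ∅ ∧ setNbhd G A ∩ X = ∅ := by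
      intro A hXA hAY
      constructor
      · exact inter_empty_of_subset (rch_setNbhd_subset hXA) hAY
      · rw [Set.eq_empty_iff_forall_notMem]
        rintro a ⟨haN, haX⟩
        exact haN.1 (hXA haX)
    have hlam_le : ∀ A : Set V, X ⊆ A → A ∩ Y = ∅ → lam G X Y ≤ (setNbhd G A).ncard := by
      intro A h1 h2
      exact Nat.sInf_le ⟨setNbhd G A, (hNsep A h1 h2).1, (hNsep A h1 h2).2, rfl⟩
    have hNR₀sub : setNbhd G (rch G W₀ X) ⊆ W₀ := setNbhd_rch_subset
    have hNR₀ne : (setNbhd G (rch G W₀ X)).Nonempty := by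
      rcases Set.eq_empty_or_nonempty (setNbhd G (rch G W₀ X)) with he | h
      · exfalso
        have h1 := hlam_le _ hXR₀ hW₀s
        rw [he, Set.ncard_empty] at h1
        omega
      · exact h
    obtain ⟨v, hv⟩ := hNR₀ne
    have hvR₀ : v ∉ rch G W₀ X := hv.1
    have hvX : v ∉ X := fun h => hvR₀ (hXR₀ h)
    -- maximal-reach property of minimum cuts
    have hMR : ∀ U : Set V, rch G U X ∩ Y = ∅ → U ∩ X = ∅ → U.ncard = lam G X Y →
        rch G U X ⊆ rch G W₀ X := by
      intro U hUs hUd hUc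
      have hXR' : X ⊆ rch G U X := fun x hx => mem_rch_self hx (fun h => disj_mem hUd h hx)
      set A := rch G W₀ X ∪ rch G U X with hA
      have hXA : X ⊆ A := fun x hx => Or.inl (hXR₀ hx)
      have hAY : A ∩ Y = ∅ := by
        rw [Set.eq_empty_iff_forall_notMem]
        rintro a ⟨ha | ha, haY⟩
        · exact disj_mem hW₀s ha haY
        · exact disj_mem hUs ha haY
      have hI : lam G X Y ≤ (setNbhd G (rch G W₀ X ∩ rch G U X)).ncard :=
        hlam_le _ (fun x hx => ⟨hXR₀ hx, hXR' hx⟩)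
          (inter_empty_of_subset (fun a ha => ha.1) hW₀s)
      have hsubm := submod G (rch G W₀ X) (rch G U X)
      rw [← hA] at hsubm
      have hb1 : (setNbhd G (rch G W₀ X)).ncard ≤ lam G X Y := by
        rw [← hW₀c]; exact Set.ncard_le_ncard hNR₀sub (Set.toFinite _)
      have hb2 : (setNbhd G (rch G U X)).ncard ≤ lam G X Y := by
        rw [← hUc]; exact Set.ncard_le_ncard setNbhd_rch_subset (Set.toFinite _)
      have hAub : (setNbhd G A).ncard ≤ lam G X Y := by omega
      have hAlb := hlam_le A hXA hAY
      have hAMC : setNbhd G A ∈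
          {U : Set V | rch G U X ∩ Y = ∅ ∧ U ∩ X = ∅ ∧ U.ncard = lam G X Y} :=
        ⟨(hNsep A hXA hAY).1, (hNsep A hXA hAY).2, le_antisymm hAub hAlb⟩
      have hdisjA : ∀ u ∈ A, u ∉ setNbhd G A := fun u hu h => h.1 hu
      have hR₀A : rch G W₀ X ⊆ rch G (setNbhd G A) X :=
        rch_subset_rch (fun u hu => hdisjA u (Or.inl hu))
          (fun x hx => ⟨hx.1, hdisjA x (hXA hx.1)⟩)
      have hR'A : rch G U X ⊆ rch G (setNbhd G A) X :=
        rch_subset_rch (fun u hu => hdisjA u (Or.inr hu))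
          (fun x hx => ⟨hx.1, hdisjA x (hXA hx.1)⟩)
      have hcle : (rch G (setNbhd G A) X).ncard ≤ (rch G W₀ X).ncard := hW₀max _ hAMC
      have heq : rch G W₀ X = rch G (setNbhd G A) X :=
        Set.eq_of_subset_of_ncard_le hR₀A hcle (Set.toFinite _)
      exact fun u hu => heq ▸ hR'A hu
    -- pushing lemma
    have hpush : ∀ W, Imp G X Y p W → rch G W₀ X ⊆ rch G W X := by
      intro W hW
      obtain ⟨hWp, hWX, hWY, hWN, hWmax⟩ := hW
      have hXR : X ⊆ rch G W X := fun x hx => mem_rch_self hx (fun h => disj_mem hWX h hx)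
      set A := rch G W₀ X ∪ rch G W X with hA
      have hXA : X ⊆ A := fun x hx => Or.inl (hXR₀ hx)
      have hAY : A ∩ Y = ∅ := by
        rw [Set.eq_empty_iff_forall_notMem]
        rintro a ⟨ha | ha, haY⟩
        · exact disj_mem hW₀s ha haY
        · exact disj_mem hWY ha haY
      have hI : lam G X Y ≤ (setNbhd G (rch G W₀ X ∩ rch G W X)).ncard :=
        hlam_le _ (fun x hx => ⟨hXR₀ hx, hXR hx⟩)
          (inter_empty_of_subset (fun a ha => ha.1) hW₀s)
      have hsubm := submod G (rch G W₀ X) (rch G W X)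
      rw [← hA] at hsubm
      have hb1 : (setNbhd G (rch G W₀ X)).ncard ≤ lam G X Y := by
        rw [← hW₀c]; exact Set.ncard_le_ncard hNR₀sub (Set.toFinite _)
      have hbW : (setNbhd G (rch G W X)).ncard = W.ncard := by rw [← hWN]
      have hNAle : (setNbhd G A).ncard ≤ W.ncard := by omega
      have hdisjA : ∀ u ∈ A, u ∉ setNbhd G A := fun u hu h => h.1 hu
      have hsepU : rch G (setNbhd G A) (rch G W X) ∩ Y = ∅ :=
        inter_empty_of_subset (rch_setNbhd_subset (fun u hu => Or.inr hu)) hAY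
      have hnotss := hWmax (setNbhd G A) hsepU hNAle
      have hRsub : rch G W X ⊆ rch G (setNbhd G A) (rch G W X) := fun u hu =>
        mem_rch_self hu (hdisjA u (Or.inr hu))
      have hR₀sub : rch G W₀ X ⊆ rch G (setNbhd G A) (rch G W X) :=
        rch_subset_rch (fun u hu => hdisjA u (Or.inl hu))
          (fun x hx => ⟨hXR hx.1, hdisjA x (hXA hx.1)⟩)
      by_contra hnc
      obtain ⟨r, hrR₀, hrR⟩ := Set.not_subset.1 hnc
      refine hnotss ?_
      rw [Set.ssubset_def]
      exact ⟨hRsub, fun hsup => hrR (hsup (hR₀sub hrR₀))⟩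
    have hμ1 : 1 ≤ μ := by omega
    have hcover : {W : Set V | Imp G X Y p W} ⊆
        {W : Set V | Imp G X Y p W ∧ v ∈ W} ∪
        {W : Set V | Imp G X Y p W ∧ v ∈ rch G W X} := by
      intro W hW
      by_cases hvW : v ∈ W
      · exact Or.inl ⟨hW, hvW⟩
      · obtain ⟨u, huR₀, hadj⟩ := hv.2
        exact Or.inr ⟨hW, rch_step (hpush W hW huR₀) hadj hvW⟩
    -- Family A : v ∈ W
    have hSA : {W : Set V | Imp G X Y p W ∧ v ∈ W}.ncard ≤ 2 ^ (μ - 1) := by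
      have htarget : {W : Set V | Imp (delV G v) X Y (p - 1) W}.ncard ≤ 2 ^ (μ - 1) := by
        by_cases hne' : (cutSizes (delV G v) X Y).Nonempty
        · have hlam' : lam G X Y ≤ lam (delV G v) X Y + 1 := by
            obtain ⟨U, hU1, hU2, hU3⟩ := Nat.sInf_mem hne'
            have hU3' : U.ncard = lam (delV G v) X Y := hU3
            have heq : rch (delV G v) U X = rch G (insert v U) X := rch_delV hvX
            have h1 : lam G X Y ≤ (insert v U).ncard := by
              refine Nat.sInf_le ⟨insert v U, ?_, ?_, rfl⟩
              · rw [← heq]; exact hU1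
              · rw [Set.eq_empty_iff_forall_notMem]
                rintro a ⟨ha, haX⟩
                rcases Set.mem_insert_iff.1 ha with rfl | ha'
                · exact hvX haX
                · exact disj_mem hU2 ha' haX
            have h2 := Set.ncard_insert_le v U
            omega
          exact IH (μ - 1) (by omega) (delV G v) X Y (p - 1) (by omega)
        · rw [imp_empty_of_no_cut hne']
          simp
      refine le_trans
        (Set.ncard_le_ncard_of_injOn (fun W => W \ {v}) ?_ ?_ (Set.toFinite _)) htarget
      · rintro W ⟨hW, hvW⟩
        show Imp (delV G v) X Y (p - 1) (W \ {v})
        obtain ⟨hWp, hWX, hWY, hWN, hWmax⟩ := hW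
        have hvR : v ∉ rch G W X := fun h => (rch_subset_compl h) hvW
        have hW1 : 1 ≤ W.ncard := (Set.ncard_pos (Set.toFinite W)).2 ⟨v, hvW⟩
        have hRchange : rch (delV G v) (W \ {v}) X = rch G W X := by
          rw [rch_delV hvX, Set.insert_diff_singleton, Set.insert_eq_self.2 hvW]
        refine ⟨?_, ?_, ?_, ?_, ?_⟩
        · rw [Set.ncard_diff_singleton_of_mem hvW]
          omega
        · exact inter_empty_of_subset (fun a ha => ha.1) hWX
        · rw [hRchange]; exact hWY
        · rw [hRchange, setNbhd_delV hvR, ← hWN]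
        · intro U hU1 hU2
          rw [hRchange] at hU1 ⊢
          have heqU : rch (delV G v) U (rch G W X) = rch G (insert v U) (rch G W X) :=
            rch_delV hvR
          rw [heqU] at hU1 ⊢
          refine hWmax (insert v U) hU1 ?_
          have h3 := Set.ncard_insert_le v U
          rw [Set.ncard_diff_singleton_of_mem hvW] at hU2
          omega
      · rintro W₁ ⟨_, h₁⟩ W₂ ⟨_, h₂⟩ heq
        have e1 : insert v (W₁ \ {v}) = W₁ := by
          rw [Set.insert_diff_singleton, Set.insert_eq_self.2 h₁]
        have e2 : insert v (W₂ \ {v}) = W₂ := by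
          rw [Set.insert_diff_singleton, Set.insert_eq_self.2 h₂]
        rw [← e1, ← e2]
        exact congrArg (insert v) heq
    -- Family B : v ∈ R(W)
    have hSB : {W : Set V | Imp G X Y p W ∧ v ∈ rch G W X}.ncard ≤ 2 ^ (μ - 1) := by
      set X' := (X ∪ rch G W₀ X) ∪ {v} with hX'
      have htarget : {W : Set V | Imp G X' Y p W}.ncard ≤ 2 ^ (μ - 1) := by
        by_cases hne' : (cutSizes G X' Y).Nonempty
        · have hlam' : lam G X Y + 1 ≤ lam G X' Y := by
            obtain ⟨U, hU1, hU2, hU3⟩ := Nat.sInf_mem hne'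
            have hU3' : U.ncard = lam G X' Y := hU3
            by_contra hcon
            push_neg at hcon
            have hUdX : U ∩ X = ∅ := by
              rw [Set.eq_empty_iff_forall_notMem]
              rintro a ⟨haU, haX⟩
              exact disj_mem hU2 haU (Or.inl (Or.inl haX))
            have hUsX : rch G U X ∩ Y = ∅ :=
              inter_empty_of_subset
                (rch_mono_sources (fun u hu => ⟨Or.inl (Or.inl hu.1), hu.2⟩)) hU1
            have hUlam : lam G X Y ≤ U.ncard := Nat.sInf_le ⟨U, hUsX, hUdX, rfl⟩
            have hUc : U.ncard = lam G X Y := by omega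
            have h1 : rch G U X ⊆ rch G W₀ X := hMR U hUsX hUdX hUc
            have hUX' : ∀ u ∈ X', u ∉ U := fun u hu h => disj_mem hU2 h hu
            have hR₀U : rch G W₀ X ⊆ rch G U X :=
              rch_subset_rch (fun u hu => hUX' u (Or.inl (Or.inr hu)))
                (fun x hx => ⟨hx.1, hUX' x (Or.inl (Or.inl hx.1))⟩)
            obtain ⟨u, huR₀, hadj⟩ := hv.2
            have hvr : v ∈ rch G U X :=
              rch_step (hR₀U huR₀) hadj (hUX' v (Or.inr rfl))
            exact hvR₀ (h1 hvr)
          exact IH (μ - 1) (by omega) G X' Y p (by omega)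
        · rw [imp_empty_of_no_cut hne']
          simp
      refine le_trans
        (Set.ncard_le_ncard_of_injOn (fun W => W) ?_ (fun a _ b _ h => h) (Set.toFinite _))
        htarget
      rintro W ⟨hW, hvW⟩
      have hR₀R : rch G W₀ X ⊆ rch G W X := hpush W hW
      obtain ⟨hWp, hWX, hWY, hWN, hWmax⟩ := hW
      have hXR : X ⊆ rch G W X := fun x hx => mem_rch_self hx (fun h => disj_mem hWX h hx)
      have hRX' : rch G W X' = rch G W X := by
        apply Set.Subset.antisymm
        · refine rch_subset_of_closed ?_ (fun a ha b hab hb => rch_step ha hab hb)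
          rintro u ⟨hu, huW⟩
          rcases hu with (hu | hu) | hu
          · exact hXR hu
          · exact hR₀R hu
          · simp only [Set.mem_singleton_iff] at hu
            subst hu
            exact hvW
        · exact rch_mono_sources (fun u hu => ⟨Or.inl (Or.inl hu.1), hu.2⟩)
      show Imp G X' Y p W
      refine ⟨hWp, ?_, ?_, ?_, ?_⟩
      · rw [Set.eq_empty_iff_forall_notMem]
        rintro a ⟨haW, haX'⟩
        rcases haX' with (ha | ha) | ha
        · exact disj_mem hWX haW ha
        · exact (rch_subset_compl (hR₀R ha)) haW
        · simp only [Set.mem_singleton_iff] at ha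
          subst ha
          exact (rch_subset_compl hvW) haW
      · rw [hRX']; exact hWY
      · rw [hRX']; exact hWN
      · rw [hRX']; exact hWmax
    calc {W : Set V | Imp G X Y p W}.ncard
        ≤ ({W : Set V | Imp G X Y p W ∧ v ∈ W} ∪
            {W : Set V | Imp G X Y p W ∧ v ∈ rch G W X}).ncard :=
          Set.ncard_le_ncard hcover (Set.toFinite _)
      _ ≤ {W : Set V | Imp G X Y p W ∧ v ∈ W}.ncard +
            {W : Set V | Imp G X Y p W ∧ v ∈ rch G W X}.ncard :=
          Set.ncard_union_le _ _
      _ ≤ 2 ^ (μ - 1) + 2 ^ (μ - 1) := Nat.add_le_add hSA hSB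
      _ = 2 ^ μ := by rw [← two_mul, ← pow_succ']; congr 1; omega

end ChipAux
namespace ChipAux

open Relation

variable {V : Type*}

lemma rch_nbhd_eq {G : SimpleGraph V} {C X₀ : Set V} (hconn : (G.induce C).Connected)
    (hX : X₀ ⊆ C) (hne : X₀.Nonempty) : rch G (setNbhd G C) X₀ = C := by
  apply Set.Subset.antisymm
  · exact rch_setNbhd_subset hX
  · intro u hu
    obtain ⟨x, hx⟩ := hne
    have hreach : (G.induce C).Reachable ⟨x, hX hx⟩ ⟨u, hu⟩ := hconn.preconnected _ _
    obtain ⟨w⟩ := hreach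
    have hrtg := walk_to_rtg G C w
    have hrtg2 : ReflTransGen (Rel G (setNbhd G C)) x u :=
      ReflTransGen.mono (fun a b hab => ⟨hab.1, fun h => h.1 hab.2.1, fun h => h.1 hab.2.2⟩) _ _ hrtg
    exact ⟨fun h => h.1 hu, x, ⟨hx, fun h => h.1 (hX hx)⟩, hrtg2⟩

lemma chip_imp {G : SimpleGraph V} {k : ℕ} {S C' : Set V} [Fintype V] [DecidableEq V]
    (hC' : IsChip G k S C') {v : V} (hv : v ∈ C') :
    Imp G {v} S (3 * k) (setNbhd G C') := by
  obtain ⟨hconn, hsize, hsep, hmin, hmax⟩ := hC'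
  have hRv : rch G (setNbhd G C') {v} = C' :=
    rch_nbhd_eq hconn (Set.singleton_subset_iff.2 hv) ⟨v, rfl⟩
  have hRC : rch G (setNbhd G C') C' = C' :=
    rch_nbhd_eq hconn (fun a ha => ha) ⟨v, hv⟩
  have hsep' : C' ∩ S = ∅ := by
    have h := isSeparator_iff.1 hsep
    rwa [hRC] at h
  refine ⟨hsize, ?_, ?_, ?_, ?_⟩
  · rw [Set.eq_empty_iff_forall_notMem]
    rintro a ⟨haN, ha⟩
    simp only [Set.mem_singleton_iff] at ha
    subst ha
    exact haN.1 hv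
  · rw [hRv]; exact hsep'
  · rw [hRv]
  · intro U hU1 hU2
    rw [hRv] at hU1 ⊢
    have hUsep : IsSeparator G C' S U := isSeparator_iff.2 hU1
    have h := hmax U hUsep hU2
    rw [reachSet_eq_rch, reachSet_eq_rch, hRC] at h
    exact h

lemma chipsAt_card (G : SimpleGraph V) (k : ℕ) (S : Set V) (v : V)
    [Fintype V] [DecidableEq V] :
    {C' : Set V | IsChip G k S C' ∧ v ∈ C'}.ncard ≤ 4 ^ (3 * k) := by
  have h1 : {C' : Set V | IsChip G k S C' ∧ v ∈ C'}.ncard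
      ≤ {W : Set V | Imp G {v} S (3 * k) W}.ncard := by
    refine Set.ncard_le_ncard_of_injOn (fun C' => setNbhd G C') ?_ ?_ (Set.toFinite _)
    · rintro C' ⟨hC', hv'⟩
      exact chip_imp hC' hv'
    · rintro C₁ ⟨h₁, hv₁⟩ C₂ ⟨h₂, hv₂⟩ heq
      have e₁ : rch G (setNbhd G C₁) {v} = C₁ :=
        rch_nbhd_eq h₁.1 (Set.singleton_subset_iff.2 hv₁) ⟨v, rfl⟩
      have e₂ : rch G (setNbhd G C₂) {v} = C₂ :=
        rch_nbhd_eq h₂.1 (Set.singleton_subset_iff.2 hv₂) ⟨v, rfl⟩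
      rw [← e₁, ← e₂]
      exact congrArg (fun W => rch G W {v}) heq
  have h2 := imp_card (2 * (3 * k)) G {v} S (3 * k) (Nat.le_add_right _ _)
  calc {C' : Set V | IsChip G k S C' ∧ v ∈ C'}.ncard
      ≤ {W : Set V | Imp G {v} S (3 * k) W}.ncard := h1
    _ ≤ 2 ^ (2 * (3 * k)) := h2
    _ = 4 ^ (3 * k) := by rw [pow_mul]; norm_num

lemma exit_vertex {G : SimpleGraph V} {C C' : Set V} (hconn : (G.induce C').Connected)
    (hb : (C ∩ C').Nonempty) (hns : ¬ C' ⊆ C) : ∃ w ∈ C', w ∈ setNbhd G C := by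
  obtain ⟨b, hbC, hbC'⟩ := hb
  obtain ⟨a, haC', haC⟩ := Set.not_subset.1 hns
  have hreach : (G.induce C').Reachable ⟨b, hbC'⟩ ⟨a, haC'⟩ := hconn.preconnected _ _
  obtain ⟨w⟩ := hreach
  have hrtg := walk_to_rtg G C' w
  have key : ∀ {y : V}, ReflTransGen (fun u v => G.Adj u v ∧ u ∈ C' ∧ v ∈ C') b y →
      y ∈ C ∨ ∃ w ∈ C', w ∈ setNbhd G C := by
    intro y h
    induction h with
    | refl => exact Or.inl hbC
    | @tail c d h₁ step ih =>
        rcases ih with hyC | hfound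
        · by_cases hzC : d ∈ C
          · exact Or.inl hzC
          · exact Or.inr ⟨d, step.2.2, hzC, c, hyC, step.1⟩
        · exact Or.inr hfound
  rcases key hrtg with h | h
  · exact absurd h haC
  · exact h

lemma ncard_biUnion_le {α β : Type*} (s : Finset α) (f : α → Set β) :
    (⋃ x ∈ s, f x).ncard ≤ ∑ x ∈ s, (f x).ncard := by
  classical
  induction s using Finset.induction_on with
  | empty => simp
  | @insert a s ha ih =>
      rw [Finset.sum_insert ha, Finset.set_biUnion_insert]
      exact le_trans (Set.ncard_union_le _ _) (Nat.add_le_add_left ih _)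

end ChipAux
open ChipAux in
/-- a chip touches at most `3k·4^{3k}` other maximal chips
(Lemma 3.6). -/
theorem touches_bound {V : Type*} [Fintype V] [DecidableEq V]
    (G : SimpleGraph V) (k : ℕ) (hk : 0 < k) (S : Set V) (C : Set V)
    (hC : C ∈ maximalChips G k S) :
    {C' | C' ∈ maximalChips G k S ∧ C' ≠ C ∧ Touches G C C'}.ncard
      ≤ 3 * k * 4 ^ (3 * k) := by
  classical
  have hcov : {C' | C' ∈ maximalChips G k S ∧ C' ≠ C ∧ Touches G C C'} ⊆
      ⋃ v ∈ (setNbhd G C).toFinset, {C' : Set V | IsChip G k S C' ∧ v ∈ C'} := by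
    rintro C' ⟨hC', hne, ht⟩
    have hnsub : ¬ C' ⊆ C := by
      intro hsub
      exact hne ((hC'.2 C hC.1 hsub).symm)
    have hmeets : ∃ w ∈ C', w ∈ setNbhd G C := by
      rcases ht with hint | ⟨u, huC, w, hwC', hadj⟩
      · exact exit_vertex hC'.1.1 hint hnsub
      · by_cases hwC : w ∈ C
        · exact exit_vertex hC'.1.1 ⟨w, hwC, hwC'⟩ hnsub
        · exact ⟨w, hwC', hwC, u, huC, hadj⟩
    obtain ⟨w, hw1, hw2⟩ := hmeets
    exact Set.mem_biUnion (Set.mem_toFinset.2 hw2) ⟨hC'.1, hw1⟩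
  have hcard : (setNbhd G C).toFinset.card ≤ 3 * k := by
    rw [← Set.ncard_eq_toFinset_card']
    exact hC.1.2.1
  calc {C' | C' ∈ maximalChips G k S ∧ C' ≠ C ∧ Touches G C C'}.ncard
      ≤ (⋃ v ∈ (setNbhd G C).toFinset, {C' : Set V | IsChip G k S C' ∧ v ∈ C'}).ncard :=
        Set.ncard_le_ncard hcov (Set.toFinite _)
    _ ≤ ∑ v ∈ (setNbhd G C).toFinset, {C' : Set V | IsChip G k S C' ∧ v ∈ C'}.ncard :=
        ncard_biUnion_le _ _
    _ ≤ ∑ _v ∈ (setNbhd G C).toFinset, 4 ^ (3 * k) :=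
        Finset.sum_le_sum (fun v _ => chipsAt_card G k S v)
    _ = (setNbhd G C).toFinset.card * 4 ^ (3 * k) := by
        rw [Finset.sum_const, smul_eq_mul]
    _ ≤ 3 * k * 4 ^ (3 * k) := Nat.mul_le_mul_right _ hcard
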